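/- Suppose T is piecewise invertible: there is a countable family (Xⱼ)_{j∈J} of pairwise disjoint measurable subsets of X with λ(X \ ⋃ⱼ Xⱼ) = 0 such that for each j the restriction of T to Xⱼ is injective and maps every measurable subset of Xⱼ to a measurable subset of X'. Then there exists a measurable set Y ⊆ X with λ(X \ Y) = 0 such that T restricted to Y has measurable images (T(A) is measurable for every measurable A ⊆ Y) and no ambitious null-sets (every measurable A ⊆ Y with λ(A) = 0 satisfies λ'(T(A)) = 0). -/

import Mathlib

open MeasureTheory Set

/-- If `T` is piecewise invertible (a countable measurable partition mod λ
on whose pieces `T` is injective with measurable images), then there is a full-measure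
measurable set `Y` such that `T` restricted to `Y` has measurable images and no ambitious
null-sets. -/
theorem stmt_8 {X X' : Type*} [MeasurableSpace X] [MeasurableSpace X']
    (lam : Measure X) (lam' : Measure X') [SigmaFinite lam] [SigmaFinite lam']
    (T : X → X') (hT : Measurable T) (hnp : lam.map T ≪ lam')
    (J : Type*) [Countable J] (Xj : J → Set X)
    (hXjm : ∀ j, MeasurableSet (Xj j))
    (hdisj : Pairwise (Function.onFun Disjoint Xj))
    (hcov : lam (⋃ j, Xj j)ᶜ = 0)
    (hinj : ∀ j, Set.InjOn T (Xj j))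
    (himg : ∀ j, ∀ A : Set X, A ⊆ Xj j → MeasurableSet A → MeasurableSet (T '' A)) :
    ∃ Y : Set X, MeasurableSet Y ∧ lam Yᶜ = 0 ∧
      (∀ A : Set X, A ⊆ Y → MeasurableSet A → MeasurableSet (T '' A)) ∧
      (∀ A : Set X, A ⊆ Y → MeasurableSet A → lam A = 0 → lam' (T '' A) = 0) := by
  classical
  -- Step 1: for each piece, find a full-measure subset on which null sets map to null sets.
  have key : ∀ j : J, ∃ S : Set X, MeasurableSet S ∧ lam Sᶜ = 0 ∧
      ∀ A : Set X, A ⊆ Xj j ∩ S → MeasurableSet A → lam A = 0 → lam' (T '' A) = 0 := by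
    intro j
    have hdisjimg : ∀ {s t : Set X}, Disjoint s t →
        Disjoint (T '' (s ∩ Xj j)) (T '' (t ∩ Xj j)) := by
      intro s t hst
      rw [Set.disjoint_left]
      rintro y ⟨a, ⟨has, haj⟩, rfl⟩ ⟨b, ⟨hbt, hbj⟩, hba⟩
      have hab : b = a := hinj j hbj haj hba
      exact (Set.disjoint_left.1 hst has) (hab ▸ hbt)
    set mu : Measure X := Measure.ofMeasurable (fun s _ => lam' (T '' (s ∩ Xj j)))
      (by simp) (by
        intro f hfm hfd
        rw [Set.iUnion_inter, Set.image_iUnion]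
        exact measure_iUnion (fun i k hik => hdisjimg (hfd hik))
          (fun i => himg j _ Set.inter_subset_right ((hfm i).inter (hXjm j)))) with hmu
    have hmu_apply : ∀ s : Set X, MeasurableSet s → mu s = lam' (T '' (s ∩ Xj j)) :=
      fun s hs => Measure.ofMeasurable_apply s hs
    have hsf : SigmaFinite mu := by
      refine ⟨⟨⟨fun n => T ⁻¹' (spanningSets lam' n), fun _ => trivial, ?_, ?_⟩⟩⟩
      · intro n
        rw [hmu_apply _ (hT (measurableSet_spanningSets lam' n))]
        refine lt_of_le_of_lt (measure_mono ?_) (measure_spanningSets_lt_top lam' n)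
        rintro y ⟨a, ⟨ha, _⟩, rfl⟩; exact ha
      · rw [← Set.preimage_iUnion, iUnion_spanningSets, Set.preimage_univ]
    obtain ⟨S, hSm, hS0, hSc0⟩ := mu.mutuallySingular_singularPart lam
    refine ⟨S, hSm, hSc0, ?_⟩
    intro A hA hAm hA0
    have h1 : mu A = 0 := by
      have hdec := mu.haveLebesgueDecomposition_add lam
      have : mu A = (mu.singularPart lam) A + (lam.withDensity (mu.rnDeriv lam)) A := by
        conv_lhs => rw [hdec]
        simp [Measure.add_apply]
      rw [this]
      have h2 : (mu.singularPart lam) A = 0 :=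
        le_antisymm (hS0 ▸ measure_mono (hA.trans Set.inter_subset_right)) (zero_le)
      have h3 : (lam.withDensity (mu.rnDeriv lam)) A = 0 :=
        (withDensity_absolutelyContinuous lam _) hA0
      rw [h2, h3, add_zero]
    have hAX : A ∩ Xj j = A :=
      Set.inter_eq_self_of_subset_left (hA.trans Set.inter_subset_left)
    rw [← hAX]
    rw [← hmu_apply A hAm] at *
    exact h1
  choose S hSm hS0 hkey using key
  refine ⟨⋃ j, Xj j ∩ S j,
    MeasurableSet.iUnion (fun j => (hXjm j).inter (hSm j)), ?_, ?_, ?_⟩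
  · -- null complement
    have hsub : (⋃ j, Xj j ∩ S j)ᶜ ⊆ (⋃ j, Xj j)ᶜ ∪ ⋃ j, (S j)ᶜ := by
      intro x hx
      by_cases hxX : x ∈ ⋃ j, Xj j
      · right
        obtain ⟨j, hj⟩ := Set.mem_iUnion.1 hxX
        refine Set.mem_iUnion.2 ⟨j, fun hxS => ?_⟩
        exact hx (Set.mem_iUnion.2 ⟨j, hj, hxS⟩)
      · exact Or.inl hxX
    refine le_antisymm (le_trans (measure_mono hsub) ?_) (zero_le)
    refine le_trans (measure_union_le _ _) ?_
    rw [hcov]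
    simpa using measure_iUnion_null (fun j => hS0 j)
  · -- measurable images
    intro A hA hAm
    have : A = ⋃ j, A ∩ (Xj j ∩ S j) := by
      ext x
      simp only [Set.mem_iUnion, Set.mem_inter_iff]
      constructor
      · intro hx
        obtain ⟨j, hj⟩ := Set.mem_iUnion.1 (hA hx)
        exact ⟨j, hx, hj⟩
      · rintro ⟨j, hx, _⟩; exact hx
    rw [this, Set.image_iUnion]
    exact MeasurableSet.iUnion fun j =>
      himg j _ (Set.inter_subset_right.trans Set.inter_subset_left)
        (hAm.inter ((hXjm j).inter (hSm j)))
  · -- null images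
    intro A hA hAm hA0
    have hAeq : A = ⋃ j, A ∩ (Xj j ∩ S j) := by
      ext x
      simp only [Set.mem_iUnion, Set.mem_inter_iff]
      constructor
      · intro hx
        obtain ⟨j, hj⟩ := Set.mem_iUnion.1 (hA hx)
        exact ⟨j, hx, hj⟩
      · rintro ⟨j, hx, _⟩; exact hx
    rw [hAeq, Set.image_iUnion]
    refine measure_iUnion_null fun j => ?_
    refine hkey j _ Set.inter_subset_right (hAm.inter ((hXjm j).inter (hSm j))) ?_
    exact le_antisymm (hA0 ▸ measure_mono Set.inter_subset_left) (zero_le)
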